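/- arXiv:2506.19250 — 4 statements merged into one kernel-verified Lean document; each statement's English description precedes it below -/
import Mathlib

section
/- Let S and A be finite nonempty sets, let γ ∈ [0,1), let R_max ≥ 0, let r : S × A → ℝ satisfy 0 ≤ r(s,a) ≤ R_max for all (s,a), and let P : S × A → S → ℝ satisfy P(s'|s,a) ≥ 0 and ∑_{s'} P(s'|s,a) = 1 for all (s,a). Let π₁, π₂ : S → A → ℝ be stochastic policies (π_i(a|s) ≥ 0 and ∑_a π_i(a|s) = 1 for every s), and suppose there is δ ≥ 0 with ∑_a |π₁(a|s) − π₂(a|s)| ≤ δ for every state s. Let V₁, V₂ : S → ℝ satisfy the Bellman equations V_i(s) = ∑_a π_i(a|s) ( r(s,a) + γ ∑_{s'} P(s'|s,a) V_i(s') ) for all s. Then for every state s, V₁(s) − V₂(s) ≤ δ · R_max / (1 − γ)². -/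
/-- Robustness certificate for a stochastic policy: if the action distributions
of two stochastic policies are `δ`-close in `ℓ1` distance at every state, then
their value functions differ by at most `δ · R_max / (1 − γ)²`. -/
theorem stochastic_policy_robustness_certificate
    {S A : Type*} [Fintype S] [Fintype A] [Nonempty S] [Nonempty A]
    (γ Rmax δ : ℝ) (hγ0 : 0 ≤ γ) (hγ1 : γ < 1) (hRmax : 0 ≤ Rmax) (hδ : 0 ≤ δ)
    (r : S → A → ℝ) (hr0 : ∀ s a, 0 ≤ r s a) (hr1 : ∀ s a, r s a ≤ Rmax)
    (P : S → A → S → ℝ) (hP0 : ∀ s a s', 0 ≤ P s a s')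
    (hP1 : ∀ s a, ∑ s', P s a s' = 1)
    (π₁ π₂ : S → A → ℝ)
    (hπ₁0 : ∀ s a, 0 ≤ π₁ s a) (hπ₁1 : ∀ s, ∑ a, π₁ s a = 1)
    (hπ₂0 : ∀ s a, 0 ≤ π₂ s a) (hπ₂1 : ∀ s, ∑ a, π₂ s a = 1)
    (hclose : ∀ s, ∑ a, |π₁ s a - π₂ s a| ≤ δ)
    (V₁ V₂ : S → ℝ)
    (hV₁ : ∀ s, V₁ s = ∑ a, π₁ s a * (r s a + γ * ∑ s', P s a s' * V₁ s'))
    (hV₂ : ∀ s, V₂ s = ∑ a, π₂ s a * (r s a + γ * ∑ s', P s a s' * V₂ s')) :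
    ∀ s, V₁ s - V₂ s ≤ δ * Rmax / (1 - γ) ^ 2 := by
  have h1γ : (0:ℝ) < 1 - γ := by linarith
  set K : ℝ := Rmax / (1 - γ) with hKdef
  have hK0 : 0 ≤ K := div_nonneg hRmax h1γ.le
  have hKeq : Rmax + γ * K = K := by
    rw [hKdef]; field_simp [h1γ.ne']
    ring
  -- lower bound on V₂
  obtain ⟨s₀, -, hmin⟩ := Finset.exists_min_image Finset.univ V₂
    ⟨Classical.arbitrary S, Finset.mem_univ _⟩
  have hmin' : ∀ s, V₂ s₀ ≤ V₂ s := fun s => hmin s (Finset.mem_univ s)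
  have hV₂lb : ∀ s, 0 ≤ V₂ s := by
    have key : γ * V₂ s₀ ≤ V₂ s₀ := by
      calc γ * V₂ s₀ = ∑ a, π₂ s₀ a * (γ * V₂ s₀) := by
            rw [← Finset.sum_mul, hπ₂1]; ring
        _ ≤ ∑ a, π₂ s₀ a * (r s₀ a + γ * ∑ s', P s₀ a s' * V₂ s') := by
            apply Finset.sum_le_sum
            intro a _
            apply mul_le_mul_of_nonneg_left _ (hπ₂0 s₀ a)
            have hPs : γ * V₂ s₀ ≤ γ * ∑ s', P s₀ a s' * V₂ s' := by
              apply mul_le_mul_of_nonneg_left _ hγ0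
              calc V₂ s₀ = ∑ s', P s₀ a s' * V₂ s₀ := by
                    rw [← Finset.sum_mul, hP1]; ring
                _ ≤ ∑ s', P s₀ a s' * V₂ s' :=
                    Finset.sum_le_sum fun s' _ =>
                      mul_le_mul_of_nonneg_left (hmin' s') (hP0 s₀ a s')
            linarith [hr0 s₀ a]
        _ = V₂ s₀ := (hV₂ s₀).symm
    have h0 : 0 ≤ V₂ s₀ := by nlinarith
    exact fun s => h0.trans (hmin' s)
  -- upper bound on V₂
  obtain ⟨s₁, -, hmax⟩ := Finset.exists_max_image Finset.univ V₂
    ⟨Classical.arbitrary S, Finset.mem_univ _⟩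
  have hmax' : ∀ s, V₂ s ≤ V₂ s₁ := fun s => hmax s (Finset.mem_univ s)
  have hV₂ub : ∀ s, V₂ s ≤ K := by
    have key : V₂ s₁ ≤ Rmax + γ * V₂ s₁ := by
      calc V₂ s₁ = ∑ a, π₂ s₁ a * (r s₁ a + γ * ∑ s', P s₁ a s' * V₂ s') := hV₂ s₁
        _ ≤ ∑ a, π₂ s₁ a * (Rmax + γ * V₂ s₁) := by
            apply Finset.sum_le_sum
            intro a _
            apply mul_le_mul_of_nonneg_left _ (hπ₂0 s₁ a)
            have hPs : γ * ∑ s', P s₁ a s' * V₂ s' ≤ γ * V₂ s₁ := by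
              apply mul_le_mul_of_nonneg_left _ hγ0
              calc ∑ s', P s₁ a s' * V₂ s'
                  ≤ ∑ s', P s₁ a s' * V₂ s₁ :=
                    Finset.sum_le_sum fun s' _ =>
                      mul_le_mul_of_nonneg_left (hmax' s') (hP0 s₁ a s')
                _ = V₂ s₁ := by rw [← Finset.sum_mul, hP1]; ring
            linarith [hr1 s₁ a]
        _ = Rmax + γ * V₂ s₁ := by rw [← Finset.sum_mul, hπ₂1]; ring
    have h1 : V₂ s₁ ≤ K := by
      rw [hKdef]; rw [le_div_iff₀ h1γ]; nlinarith
    exact fun s => (hmax' s).trans h1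
  -- Q-value bounds
  have hQ0 : ∀ s a, 0 ≤ r s a + γ * ∑ s', P s a s' * V₂ s' := by
    intro s a
    have : 0 ≤ ∑ s', P s a s' * V₂ s' :=
      Finset.sum_nonneg fun s' _ => mul_nonneg (hP0 s a s') (hV₂lb s')
    nlinarith [hr0 s a]
  have hQK : ∀ s a, r s a + γ * ∑ s', P s a s' * V₂ s' ≤ K := by
    intro s a
    have h1 : ∑ s', P s a s' * V₂ s' ≤ K := by
      calc ∑ s', P s a s' * V₂ s' ≤ ∑ s', P s a s' * K :=
            Finset.sum_le_sum fun s' _ =>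
              mul_le_mul_of_nonneg_left (hV₂ub s') (hP0 s a s')
        _ = K := by rw [← Finset.sum_mul, hP1]; ring
    have := hr1 s a
    nlinarith
  -- max of the difference
  obtain ⟨s₂, -, hmaxD⟩ := Finset.exists_max_image Finset.univ (fun s => V₁ s - V₂ s)
    ⟨Classical.arbitrary S, Finset.mem_univ _⟩
  have hmaxD' : ∀ s, V₁ s - V₂ s ≤ V₁ s₂ - V₂ s₂ := fun s => hmaxD s (Finset.mem_univ s)
  set M : ℝ := V₁ s₂ - V₂ s₂ with hM
  have key : M ≤ δ * K + γ * M := by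
    have hsplit : M = (∑ a, (π₁ s₂ a - π₂ s₂ a) * (r s₂ a + γ * ∑ s', P s₂ a s' * V₂ s'))
        + γ * ∑ a, π₁ s₂ a * ∑ s', P s₂ a s' * (V₁ s' - V₂ s') := by
      rw [hM, hV₁ s₂, hV₂ s₂, Finset.mul_sum, ← Finset.sum_add_distrib, ← Finset.sum_sub_distrib]
      apply Finset.sum_congr rfl
      intro a _
      have : ∑ s', P s₂ a s' * (V₁ s' - V₂ s')
          = (∑ s', P s₂ a s' * V₁ s') - ∑ s', P s₂ a s' * V₂ s' := by
        rw [← Finset.sum_sub_distrib]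
        exact Finset.sum_congr rfl fun s' _ => by ring
      rw [this]; ring
    have h1 : (∑ a, (π₁ s₂ a - π₂ s₂ a) * (r s₂ a + γ * ∑ s', P s₂ a s' * V₂ s')) ≤ δ * K := by
      calc (∑ a, (π₁ s₂ a - π₂ s₂ a) * (r s₂ a + γ * ∑ s', P s₂ a s' * V₂ s'))
          ≤ ∑ a, |π₁ s₂ a - π₂ s₂ a| * K := by
            apply Finset.sum_le_sum
            intro a _
            calc (π₁ s₂ a - π₂ s₂ a) * (r s₂ a + γ * ∑ s', P s₂ a s' * V₂ s')
                ≤ |π₁ s₂ a - π₂ s₂ a| * (r s₂ a + γ * ∑ s', P s₂ a s' * V₂ s') :=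
                  mul_le_mul_of_nonneg_right (le_abs_self _) (hQ0 s₂ a)
              _ ≤ |π₁ s₂ a - π₂ s₂ a| * K :=
                  mul_le_mul_of_nonneg_left (hQK s₂ a) (abs_nonneg _)
        _ = (∑ a, |π₁ s₂ a - π₂ s₂ a|) * K := by rw [Finset.sum_mul]
        _ ≤ δ * K := mul_le_mul_of_nonneg_right (hclose s₂) hK0
    have h2 : γ * ∑ a, π₁ s₂ a * ∑ s', P s₂ a s' * (V₁ s' - V₂ s') ≤ γ * M := by
      apply mul_le_mul_of_nonneg_left _ hγ0
      calc ∑ a, π₁ s₂ a * ∑ s', P s₂ a s' * (V₁ s' - V₂ s')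
          ≤ ∑ a, π₁ s₂ a * M := by
            apply Finset.sum_le_sum
            intro a _
            apply mul_le_mul_of_nonneg_left _ (hπ₁0 s₂ a)
            calc ∑ s', P s₂ a s' * (V₁ s' - V₂ s')
                ≤ ∑ s', P s₂ a s' * M :=
                  Finset.sum_le_sum fun s' _ =>
                    mul_le_mul_of_nonneg_left (hmaxD' s') (hP0 s₂ a s')
              _ = M := by rw [← Finset.sum_mul, hP1]; ring
        _ = M := by rw [← Finset.sum_mul, hπ₁1]; ring
    linarith [hsplit]
  have hMfin : M ≤ δ * Rmax / (1 - γ) ^ 2 := by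
    have hM1 : (1 - γ) * M ≤ δ * K := by linarith
    have hKR : K * (1 - γ) = Rmax := div_mul_cancel₀ _ h1γ.ne'
    rw [le_div_iff₀ (by positivity : (0:ℝ) < (1 - γ) ^ 2)]
    nlinarith [mul_le_mul_of_nonneg_left hM1 h1γ.le]
  exact fun s => (hmaxD' s).trans hMfin
end

section
/- Let S be a finite nonempty metric space with distance d_S, let A be a metric space with distance d_A, let γ ∈ [0,1), R_max ≥ 0, L_r ≥ 0, L_P ≥ 0. Let r : S × A → ℝ satisfy 0 ≤ r(s,a) ≤ R_max and |r(s,a) − r(s',a')| ≤ L_r (d_S(s,s') + d_A(a,a')) for all s,s',a,a'. Let P : S × A → S → ℝ satisfy P(s₁|s,a) ≥ 0, ∑_{s₁} P(s₁|s,a) = 1, and ∑_{s₁} |P(s₁|s,a) − P(s₁|s',a')| ≤ L_P (d_S(s,s') + d_A(a,a')). Let π₁, π₂ : S → A be deterministic policies with d_A(π₁(s), π₂(s)) ≤ ε for every s, where ε ≥ 0. Let V₁, V₂ : S → ℝ satisfy V_i(s) = r(s, π_i(s)) + γ ∑_{s'} P(s'|s, π_i(s)) V_i(s') for all s. Then for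 every state s, V₁(s) − V₂(s) ≤ (1/(1−γ)) · (L_r + γ R_max L_P / (1−γ)) · ε. -/
/-- Robustness certificate for a deterministic policy: in an `(L_P, L_r)`-Lipschitz
finite discounted decision model, if two deterministic policies choose `ε`-close
actions at every state, then their value functions differ by at most
`(1/(1−γ)) · (L_r + γ R_max L_P / (1−γ)) · ε`. -/
theorem deterministic_policy_robustness_certificate
    {S A : Type*} [MetricSpace S] [Fintype S] [Nonempty S] [MetricSpace A]
    (γ Rmax Lr LP ε : ℝ) (hγ0 : 0 ≤ γ) (hγ1 : γ < 1) (hRmax : 0 ≤ Rmax)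
    (hLr : 0 ≤ Lr) (hLP : 0 ≤ LP) (hε : 0 ≤ ε)
    (r : S → A → ℝ) (hr0 : ∀ s a, 0 ≤ r s a) (hr1 : ∀ s a, r s a ≤ Rmax)
    (hrLip : ∀ s s' : S, ∀ a a' : A,
      |r s a - r s' a'| ≤ Lr * (dist s s' + dist a a'))
    (P : S → A → S → ℝ) (hP0 : ∀ s a s₁, 0 ≤ P s a s₁)
    (hP1 : ∀ s a, ∑ s₁, P s a s₁ = 1)
    (hPLip : ∀ s s' : S, ∀ a a' : A,
      ∑ s₁, |P s a s₁ - P s' a' s₁| ≤ LP * (dist s s' + dist a a'))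
    (π₁ π₂ : S → A) (hπ : ∀ s, dist (π₁ s) (π₂ s) ≤ ε)
    (V₁ V₂ : S → ℝ)
    (hV₁ : ∀ s, V₁ s = r s (π₁ s) + γ * ∑ s', P s (π₁ s) s' * V₁ s')
    (hV₂ : ∀ s, V₂ s = r s (π₂ s) + γ * ∑ s', P s (π₂ s) s' * V₂ s') :
    ∀ s, V₁ s - V₂ s ≤ (1 / (1 - γ)) * (Lr + γ * Rmax * LP / (1 - γ)) * ε := by
  have h1γ : 0 < 1 - γ := by linarith
  -- bound on |V₂|
  obtain ⟨t, -, ht⟩ := Finset.exists_max_image Finset.univ (fun s => |V₂ s|)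
    ⟨Classical.arbitrary S, Finset.mem_univ _⟩
  have hW : ∀ s, |V₂ s| ≤ |V₂ t| := fun s => ht s (Finset.mem_univ s)
  have hVt : |V₂ t| ≤ Rmax + γ * |V₂ t| := by
    calc |V₂ t| = |r t (π₂ t) + γ * ∑ s', P t (π₂ t) s' * V₂ s'| := by rw [← hV₂ t]
    _ ≤ |r t (π₂ t)| + |γ * ∑ s', P t (π₂ t) s' * V₂ s'| := abs_add_le _ _
    _ = |r t (π₂ t)| + γ * |∑ s', P t (π₂ t) s' * V₂ s'| := by
        rw [abs_mul, abs_of_nonneg hγ0]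
    _ ≤ Rmax + γ * ∑ s', P t (π₂ t) s' * |V₂ t| := by
        have h1 : |r t (π₂ t)| ≤ Rmax := abs_le.2 ⟨by linarith [hr0 t (π₂ t)], hr1 t (π₂ t)⟩
        have h2 : |∑ s', P t (π₂ t) s' * V₂ s'| ≤ ∑ s', P t (π₂ t) s' * |V₂ t| := by
          refine (Finset.abs_sum_le_sum_abs _ _).trans (Finset.sum_le_sum fun s' _ => ?_)
          rw [abs_mul, abs_of_nonneg (hP0 t (π₂ t) s')]
          exact mul_le_mul_of_nonneg_left (hW s') (hP0 t (π₂ t) s')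
        have := mul_le_mul_of_nonneg_left h2 hγ0
        linarith
    _ = Rmax + γ * |V₂ t| := by rw [← Finset.sum_mul, hP1, one_mul]
  have hVb : ∀ s, |V₂ s| ≤ Rmax / (1 - γ) := by
    intro s
    rw [le_div_iff₀ h1γ]
    nlinarith [hW s, abs_nonneg (V₂ s)]
  -- max gap
  obtain ⟨u, -, hu⟩ := Finset.exists_max_image Finset.univ (fun s => |V₁ s - V₂ s|)
    ⟨Classical.arbitrary S, Finset.mem_univ _⟩
  have hD : ∀ s, |V₁ s - V₂ s| ≤ |V₁ u - V₂ u| := fun s => hu s (Finset.mem_univ s)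
  set D := |V₁ u - V₂ u| with hDdef
  have hDnn : 0 ≤ D := abs_nonneg _
  set C := Rmax / (1 - γ) with hCdef
  have hCnn : 0 ≤ C := div_nonneg hRmax h1γ.le
  have key : D ≤ Lr * ε + γ * (D + LP * ε * C) := by
    have e : (∑ s', P u (π₁ u) s' * V₁ s') - ∑ s', P u (π₂ u) s' * V₂ s'
        = (∑ s', P u (π₁ u) s' * (V₁ s' - V₂ s'))
          + ∑ s', (P u (π₁ u) s' - P u (π₂ u) s') * V₂ s' := by
      rw [← Finset.sum_sub_distrib, ← Finset.sum_add_distrib]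
      exact Finset.sum_congr rfl fun s' _ => by ring
    have hsplit : V₁ u - V₂ u = (r u (π₁ u) - r u (π₂ u))
        + γ * (∑ s', P u (π₁ u) s' * (V₁ s' - V₂ s'))
        + γ * (∑ s', (P u (π₁ u) s' - P u (π₂ u) s') * V₂ s') := by
      rw [hV₁ u, hV₂ u]
      linear_combination γ * e
    have hr' : |r u (π₁ u) - r u (π₂ u)| ≤ Lr * ε := by
      have h := hrLip u u (π₁ u) (π₂ u)
      simp only [dist_self, zero_add] at h
      exact h.trans (mul_le_mul_of_nonneg_left (hπ u) hLr)
    have hA : |∑ s', P u (π₁ u) s' * (V₁ s' - V₂ s')| ≤ D := by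
      refine (Finset.abs_sum_le_sum_abs _ _).trans ?_
      calc ∑ s', |P u (π₁ u) s' * (V₁ s' - V₂ s')|
          ≤ ∑ s', P u (π₁ u) s' * D := by
            refine Finset.sum_le_sum fun s' _ => ?_
            rw [abs_mul, abs_of_nonneg (hP0 u (π₁ u) s')]
            exact mul_le_mul_of_nonneg_left (hD s') (hP0 u (π₁ u) s')
        _ = D := by rw [← Finset.sum_mul, hP1, one_mul]
    have hB : |∑ s', (P u (π₁ u) s' - P u (π₂ u) s') * V₂ s'| ≤ LP * ε * C := by
      refine (Finset.abs_sum_le_sum_abs _ _).trans ?_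
      calc ∑ s', |(P u (π₁ u) s' - P u (π₂ u) s') * V₂ s'|
          ≤ ∑ s', |P u (π₁ u) s' - P u (π₂ u) s'| * C := by
            refine Finset.sum_le_sum fun s' _ => ?_
            rw [abs_mul]
            exact mul_le_mul_of_nonneg_left (hVb s') (abs_nonneg _)
        _ = (∑ s', |P u (π₁ u) s' - P u (π₂ u) s'|) * C := by rw [Finset.sum_mul]
        _ ≤ (LP * ε) * C := by
            refine mul_le_mul_of_nonneg_right ?_ hCnn
            have h := hPLip u u (π₁ u) (π₂ u)
            simp only [dist_self, zero_add] at h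
            exact h.trans (mul_le_mul_of_nonneg_left (hπ u) hLP)
    have habs : D ≤ |r u (π₁ u) - r u (π₂ u)|
        + |γ * (∑ s', P u (π₁ u) s' * (V₁ s' - V₂ s'))|
        + |γ * (∑ s', (P u (π₁ u) s' - P u (π₂ u) s') * V₂ s')| := by
      rw [hDdef, hsplit]; exact abs_add_three _ _ _
    rw [abs_mul, abs_mul, abs_of_nonneg hγ0] at habs
    have hA' := mul_le_mul_of_nonneg_left hA hγ0
    have hB' := mul_le_mul_of_nonneg_left hB hγ0
    nlinarith
  intro s
  have h1 : V₁ s - V₂ s ≤ D := (le_abs_self _).trans (hD s)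
  have hgoal : (1 / (1 - γ)) * (Lr + γ * Rmax * LP / (1 - γ)) * ε
      = ((Lr + γ * LP * C) * ε) / (1 - γ) := by
    rw [hCdef]; field_simp
  rw [hgoal, le_div_iff₀ h1γ]
  nlinarith [key]
end

section
/- Let S be a finite nonempty metric space with distance d_S and let A be a metric space with distance d_A. Let γ ∈ [0,1), R_max ≥ 0, L_r ≥ 0, L_P ≥ 0. Let r : S × A → ℝ satisfy |r(s,a) − r(s',a')| ≤ L_r (d_S(s,s') + d_A(a,a')) for all s,s' ∈ S and a,a' ∈ A, and let P : S × A → S → ℝ satisfy ∑_{s₁ ∈ S} |P(s₁|s,a) − P(s₁|s',a')| ≤ L_P (d_S(s,s') + d_A(a,a')). Let V : S → ℝ satisfy 0 ≤ V(s₁) ≤ R_max/(1−γ) for all s₁, and define Q : S × A → ℝ by Q(s,a) = r(s,a) + γ ∑_{s₁} P(s₁|s,a) V(s₁). Then for all s,s' ∈ S and a,a' ∈ A, |Q(s,a) − Q(s',a')| ≤ (L_r + γ R_max L_P/(1−γ)) (d_S(s,s') + d_A(a,a')). -/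
/-- Lipschitz continuity of the Q-function: if the reward is `L_r`-Lipschitz, the
transition kernel is `L_P`-Lipschitz in `ℓ1` distance, and the value estimate `V`
takes values in `[0, R_max/(1−γ)]`, then the associated Q-function
`Q(s,a) = r(s,a) + γ ∑_{s₁} P(s₁|s,a) V(s₁)` is
`(L_r + γ R_max L_P/(1−γ))`-Lipschitz jointly in `(s,a)`. -/
theorem q_function_lipschitz
    {S A : Type*} [MetricSpace S] [Fintype S] [Nonempty S] [MetricSpace A]
    (γ Rmax Lr LP : ℝ) (hγ0 : 0 ≤ γ) (hγ1 : γ < 1) (hRmax : 0 ≤ Rmax)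
    (hLr : 0 ≤ Lr) (hLP : 0 ≤ LP)
    (r : S → A → ℝ)
    (hrLip : ∀ s s' : S, ∀ a a' : A,
      |r s a - r s' a'| ≤ Lr * (dist s s' + dist a a'))
    (P : S → A → S → ℝ)
    (hPLip : ∀ s s' : S, ∀ a a' : A,
      ∑ s₁, |P s a s₁ - P s' a' s₁| ≤ LP * (dist s s' + dist a a'))
    (V : S → ℝ) (hV0 : ∀ s₁, 0 ≤ V s₁) (hV1 : ∀ s₁, V s₁ ≤ Rmax / (1 - γ))
    (Q : S → A → ℝ)
    (hQ : ∀ s a, Q s a = r s a + γ * ∑ s₁, P s a s₁ * V s₁) :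
    ∀ s s' : S, ∀ a a' : A,
      |Q s a - Q s' a'| ≤
        (Lr + γ * Rmax * LP / (1 - γ)) * (dist s s' + dist a a') := by
  intro s s' a a'
  have hD : 0 ≤ dist s s' + dist a a' := add_nonneg dist_nonneg dist_nonneg
  have h1γ : 0 < 1 - γ := by linarith
  have hM : 0 ≤ Rmax / (1 - γ) := div_nonneg hRmax h1γ.le
  have key : |∑ s₁, P s a s₁ * V s₁ - ∑ s₁, P s' a' s₁ * V s₁|
      ≤ Rmax / (1 - γ) * (LP * (dist s s' + dist a a')) := by
    rw [← Finset.sum_sub_distrib]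
    calc |∑ s₁, (P s a s₁ * V s₁ - P s' a' s₁ * V s₁)|
        ≤ ∑ s₁, |P s a s₁ * V s₁ - P s' a' s₁ * V s₁| := Finset.abs_sum_le_sum_abs _ _
      _ ≤ ∑ s₁, |P s a s₁ - P s' a' s₁| * (Rmax / (1 - γ)) := by
          apply Finset.sum_le_sum
          intro i _
          rw [← sub_mul, abs_mul]
          exact mul_le_mul_of_nonneg_left
            (by rw [abs_of_nonneg (hV0 i)]; exact hV1 i) (abs_nonneg _)
      _ = (∑ s₁, |P s a s₁ - P s' a' s₁|) * (Rmax / (1 - γ)) := by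
          rw [Finset.sum_mul]
      _ ≤ LP * (dist s s' + dist a a') * (Rmax / (1 - γ)) :=
          mul_le_mul_of_nonneg_right (hPLip s s' a a') hM
      _ = Rmax / (1 - γ) * (LP * (dist s s' + dist a a')) := by ring
  calc |Q s a - Q s' a'|
      = |(r s a - r s' a') + γ * (∑ s₁, P s a s₁ * V s₁ - ∑ s₁, P s' a' s₁ * V s₁)| := by
        rw [hQ, hQ]; ring_nf
    _ ≤ |r s a - r s' a'| + |γ * (∑ s₁, P s a s₁ * V s₁ - ∑ s₁, P s' a' s₁ * V s₁)| :=
        abs_add_le _ _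
    _ ≤ Lr * (dist s s' + dist a a')
        + γ * (Rmax / (1 - γ) * (LP * (dist s s' + dist a a'))) := by
        refine add_le_add (hrLip s s' a a') ?_
        rw [abs_mul, abs_of_nonneg hγ0]
        exact mul_le_mul_of_nonneg_left key hγ0
    _ = (Lr + γ * Rmax * LP / (1 - γ)) * (dist s s' + dist a a') := by
        field_simp
end

section
/- Let m ≥ 1 and define softmax : ℝ^m → ℝ^m by softmax(x)_i = exp(x_i) / ∑_{j=1}^m exp(x_j). Then for all x, y ∈ ℝ^m, (1/2) ∑_{i=1}^m |softmax(x)_i − softmax(y)_i| ≤ (m/2) · ∑_{j=1}^m |x_j − y_j|. -/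
/-- The softmax function, mapping `ℝ^m` to the probability simplex. -/
noncomputable def softmax {m : ℕ} (x : Fin m → ℝ) : Fin m → ℝ :=
  fun i => Real.exp (x i) / ∑ j : Fin m, Real.exp (x j)

lemma abs_exp_sub_exp_le (u v : ℝ) :
    |Real.exp u - Real.exp v| ≤ (Real.exp u + Real.exp v) * |u - v| := by
  rcases le_total v u with h | h
  · have hev : Real.exp v = Real.exp u * Real.exp (v - u) := by
      rw [← Real.exp_add]; ring_nf
    rw [abs_of_nonneg (by nlinarith [Real.exp_le_exp.mpr h] : (0:ℝ) ≤ Real.exp u - Real.exp v),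
      abs_of_nonneg (by linarith : (0:ℝ) ≤ u - v)]
    nlinarith [Real.add_one_le_exp (v - u), Real.exp_pos u, Real.exp_pos v,
      mul_nonneg (Real.exp_pos v).le (sub_nonneg.mpr h)]
  · have hev : Real.exp u = Real.exp v * Real.exp (u - v) := by
      rw [← Real.exp_add]; ring_nf
    rw [abs_of_nonpos (by nlinarith [Real.exp_le_exp.mpr h] : Real.exp u - Real.exp v ≤ 0),
      abs_of_nonpos (by linarith : u - v ≤ 0)]
    nlinarith [Real.add_one_le_exp (u - v), Real.exp_pos u, Real.exp_pos v,
      mul_nonneg (Real.exp_pos u).le (sub_nonneg.mpr h)]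

/-- Lipschitz bound for softmax: the total variation distance between
`softmax(x)` and `softmax(y)` is at most `(m/2)` times `‖x − y‖_1`. -/
theorem softmax_tv_lipschitz (m : ℕ) (hm : 1 ≤ m) :
    ∀ x y : Fin m → ℝ,
      (1 / 2) * ∑ i : Fin m, |softmax x i - softmax y i|
        ≤ ((m : ℝ) / 2) * ∑ j : Fin m, |x j - y j| := by
  intro x y
  set S := ∑ j : Fin m, |x j - y j| with hSdef
  have hS0 : 0 ≤ S := Finset.sum_nonneg fun _ _ => abs_nonneg _
  rcases Nat.lt_or_ge m 2 with hm1 | hm2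
  · -- m = 1
    have : m = 1 := by omega
    subst this
    have h1 : ∀ z : Fin 1 → ℝ, softmax z 0 = 1 := by
      intro z
      simp [softmax, Fin.sum_univ_one, div_self (Real.exp_pos _).ne']
    rw [Fin.sum_univ_one, h1, h1]
    simp
    positivity
  · have hA : (0:ℝ) < ∑ j : Fin m, Real.exp (x j) :=
      Finset.sum_pos (fun _ _ => Real.exp_pos _)
        (Finset.univ_nonempty_iff.mpr (Fin.pos_iff_nonempty.mp (by omega)))
    have hB : (0:ℝ) < ∑ j : Fin m, Real.exp (y j) :=
      Finset.sum_pos (fun _ _ => Real.exp_pos _)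
        (Finset.univ_nonempty_iff.mpr (Fin.pos_iff_nonempty.mp (by omega)))
    set A := ∑ j : Fin m, Real.exp (x j) with hAdef
    set B := ∑ j : Fin m, Real.exp (y j) with hBdef
    have key : ∀ i : Fin m,
        |softmax x i - softmax y i| ≤ S * (softmax x i + softmax y i) := by
      intro i
      have hnum : |Real.exp (x i) * B - Real.exp (y i) * A|
          ≤ S * (Real.exp (x i) * B + Real.exp (y i) * A) := by
        have h1 : Real.exp (x i) * B - Real.exp (y i) * A
            = ∑ j : Fin m, (Real.exp (x i + y j) - Real.exp (y i + x j)) := by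
          rw [Finset.sum_sub_distrib, hBdef, hAdef, Finset.mul_sum, Finset.mul_sum]
          simp [Real.exp_add]
        rw [h1]
        calc |∑ j : Fin m, (Real.exp (x i + y j) - Real.exp (y i + x j))|
            ≤ ∑ j : Fin m, |Real.exp (x i + y j) - Real.exp (y i + x j)| :=
              Finset.abs_sum_le_sum_abs _ _
          _ ≤ ∑ j : Fin m, (Real.exp (x i + y j) + Real.exp (y i + x j)) * S := by
              apply Finset.sum_le_sum
              intro j _
              calc |Real.exp (x i + y j) - Real.exp (y i + x j)|
                  ≤ (Real.exp (x i + y j) + Real.exp (y i + x j)) * |x i + y j - (y i + x j)| :=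
                    abs_exp_sub_exp_le _ _
                _ ≤ (Real.exp (x i + y j) + Real.exp (y i + x j)) * S := by
                    apply mul_le_mul_of_nonneg_left _ (by positivity)
                    by_cases hij : j = i
                    · subst hij
                      rw [show x j + y j - (y j + x j) = 0 by ring]
                      simpa using hS0
                    · have : |x i + y j - (y i + x j)| ≤ |x i - y i| + |x j - y j| := by
                        rw [show x i + y j - (y i + x j) = (x i - y i) - (x j - y j) by ring]
                        exact abs_sub _ _
                      refine this.trans ?_
                      have := Finset.add_sum_erase Finset.univ (fun k => |x k - y k|)
                        (Finset.mem_univ i)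
                      have hj : j ∈ Finset.univ.erase i := Finset.mem_erase.mpr ⟨hij, Finset.mem_univ j⟩
                      have h2 : |x j - y j| ≤ ∑ k ∈ Finset.univ.erase i, |x k - y k| :=
                        Finset.single_le_sum (f := fun k => |x k - y k|)
                          (fun k _ => abs_nonneg _) hj
                      rw [hSdef, ← Finset.add_sum_erase Finset.univ (fun k => |x k - y k|)
                        (Finset.mem_univ i)]
                      linarith
          _ = (∑ j : Fin m, (Real.exp (x i + y j) + Real.exp (y i + x j))) * S :=
              (Finset.sum_mul _ _ _).symm
          _ = S * (Real.exp (x i) * B + Real.exp (y i) * A) := by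
              have e1 : ∑ j : Fin m, Real.exp (x i + y j) = Real.exp (x i) * B := by
                rw [hBdef, Finset.mul_sum]; simp [Real.exp_add]
              have e2 : ∑ j : Fin m, Real.exp (y i + x j) = Real.exp (y i) * A := by
                rw [hAdef, Finset.mul_sum]; simp [Real.exp_add]
              rw [Finset.sum_add_distrib, e1, e2]; ring
      have hsm : softmax x i - softmax y i
          = (Real.exp (x i) * B - Real.exp (y i) * A) / (A * B) := by
        simp only [softmax, ← hAdef, ← hBdef]
        field_simp
      rw [hsm, abs_div, abs_of_pos (mul_pos hA hB), div_le_iff₀ (mul_pos hA hB)]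
      calc |Real.exp (x i) * B - Real.exp (y i) * A|
          ≤ S * (Real.exp (x i) * B + Real.exp (y i) * A) := hnum
        _ = S * (softmax x i + softmax y i) * (A * B) := by
            simp only [softmax, ← hAdef, ← hBdef]
            field_simp
    have hsum1 : ∀ z : Fin m → ℝ, (0 < ∑ j : Fin m, Real.exp (z j)) →
        ∑ i : Fin m, softmax z i = 1 := by
      intro z hz
      simp only [softmax]
      rw [← Finset.sum_div, div_self hz.ne']
    have htot : ∑ i : Fin m, |softmax x i - softmax y i| ≤ 2 * S := by
      calc ∑ i : Fin m, |softmax x i - softmax y i|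
          ≤ ∑ i : Fin m, S * (softmax x i + softmax y i) :=
            Finset.sum_le_sum fun i _ => key i
        _ = S * (∑ i : Fin m, softmax x i + ∑ i : Fin m, softmax y i) := by
            rw [← Finset.mul_sum, Finset.sum_add_distrib]
        _ = 2 * S := by rw [hsum1 x hA, hsum1 y hB]; ring
    have hm2' : (2:ℝ) ≤ m := by exact_mod_cast hm2
    nlinarith [htot, hS0]
end
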